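/- Let G be a finite connected simple graph on n ≥ 1 vertices. Then the minimum, over all walks in G that visit all vertices, of the length of the walk equals the minimum, over all bijections σ : {1,…,n} → V, of ∑_{j=1}^{n−1} dist(σ(j), σ(j+1)). (In other words, the shortest non-simple path visiting all vertices of G is obtained from a travelling-salesman path of the complete weighted 'supergraph' on V whose edge weights are the graph distances of G.) -/

import Mathlib

open SimpleGraph

private lemma dist_get_le {V : Type*} {G : SimpleGraph V} (hG : G.Connected) {u v : V}
    (w : G.Walk u v) :
    ∀ (j i : ℕ) (hij : i ≤ j) (hj : j < w.support.length),
    G.dist (w.support.get ⟨i, lt_of_le_of_lt hij hj⟩) (w.support.get ⟨j, hj⟩) ≤ j - i := by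
  intro j
  induction j with
  | zero =>
    intro i hij hj
    interval_cases i
    simp [SimpleGraph.dist_self]
  | succ j ih =>
    intro i hij hj
    rcases Nat.lt_or_ge i (j + 1) with h | h
    · have hij' : i ≤ j := Nat.lt_succ_iff.mp h
      have hj' : j < w.support.length := Nat.lt_of_succ_lt hj
      have hadj : G.Adj (w.support.get ⟨j, hj'⟩) (w.support.get ⟨j + 1, hj⟩) :=
        List.isChain_iff_getElem.mp w.isChain_adj_support j (by omega)
      have h1 : G.dist (w.support.get ⟨j, hj'⟩) (w.support.get ⟨j + 1, hj⟩) = 1 :=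
        SimpleGraph.dist_eq_one_iff_adj.mpr hadj
      have htri := hG.dist_triangle (u := w.support.get ⟨i, lt_of_le_of_lt hij hj⟩)
        (v := w.support.get ⟨j, hj'⟩) (w := w.support.get ⟨j + 1, hj⟩)
      have hih := ih i hij' hj'
      omega
    · have : i = j + 1 := by omega
      subst this
      simp [SimpleGraph.dist_self]

private lemma exists_walk_chain {V : Type*} {G : SimpleGraph V} (hG : G.Connected) (σ : ℕ → V) :
    ∀ m : ℕ, ∃ w : G.Walk (σ 0) (σ m),
      w.length = ∑ j ∈ Finset.range m, G.dist (σ j) (σ (j + 1)) ∧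
      ∀ j ≤ m, σ j ∈ w.support := by
  intro m
  induction m with
  | zero =>
    refine ⟨SimpleGraph.Walk.nil, by simp, ?_⟩
    intro j hj
    interval_cases j
    simp
  | succ m ih =>
    obtain ⟨w, hlen, hsup⟩ := ih
    obtain ⟨p, hp⟩ := hG.exists_walk_length_eq_dist (σ m) (σ (m + 1))
    refine ⟨w.append p, ?_, ?_⟩
    · rw [SimpleGraph.Walk.length_append, hlen, hp, Finset.sum_range_succ]
    · intro j hj
      rw [SimpleGraph.Walk.mem_support_append_iff]
      rcases Nat.lt_or_ge j (m + 1) with h | h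
      · exact Or.inl (hsup j (by omega))
      · have : j = m + 1 := by omega
        subst this
        exact Or.inr p.end_mem_support

/-- In a finite connected simple graph `G` on `n ≥ 1` vertices, the minimum length of a walk
visiting all vertices equals the minimum over all bijections `σ : {0,…,n-1} → V` of
`∑_{j<n-1} dist(σ j, σ (j+1))` (the TSP-path value of the distance "supergraph"). -/
theorem min_allVisiting_walk_eq_min_TSP_path {V : Type*} [Fintype V] (G : SimpleGraph V)
    (hG : G.Connected) (n : ℕ) (hn : n = Fintype.card V) (h1 : 1 ≤ n) :
    sInf {k : ℕ | ∃ (u v : V) (w : G.Walk u v), (∀ x : V, x ∈ w.support) ∧ w.length = k} =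
    sInf {k : ℕ | ∃ σ : ℕ → V, Set.BijOn σ (Set.Iio n) Set.univ ∧
        k = ∑ j ∈ Finset.range (n - 1), G.dist (σ j) (σ (j + 1))} := by
  classical
  set A := {k : ℕ | ∃ (u v : V) (w : G.Walk u v), (∀ x : V, x ∈ w.support) ∧ w.length = k}
    with hA
  set B := {k : ℕ | ∃ σ : ℕ → V, Set.BijOn σ (Set.Iio n) Set.univ ∧
      k = ∑ j ∈ Finset.range (n - 1), G.dist (σ j) (σ (j + 1))} with hB
  -- a canonical bijection to show nonemptiness
  have e : Fin n ≃ V := Fintype.equivOfCardEq (by simp [hn])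
  let σ0 : ℕ → V := fun j => if h : j < n then e ⟨j, h⟩ else e ⟨0, h1⟩
  have hbij0 : Set.BijOn σ0 (Set.Iio n) Set.univ := by
    refine ⟨fun _ _ => Set.mem_univ _, ?_, ?_⟩
    · intro a ha b hb hab
      simp only [Set.mem_Iio] at ha hb
      simp only [σ0, dif_pos ha, dif_pos hb] at hab
      exact congrArg Fin.val (e.injective hab)
    · intro x _
      obtain ⟨i, rfl⟩ := e.surjective x
      exact ⟨i, i.isLt, by simp [σ0, i.isLt]⟩
  have hBne : B.Nonempty := ⟨_, σ0, hbij0, rfl⟩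
  -- a walk visiting all vertices exists
  obtain ⟨w0, _, hw0sup⟩ := exists_walk_chain hG σ0 (n - 1)
  have hAne : A.Nonempty := by
    refine ⟨w0.length, σ0 0, σ0 (n - 1), w0, ?_, rfl⟩
    intro x
    obtain ⟨j, hj, rfl⟩ := hbij0.surjOn (Set.mem_univ x)
    exact hw0sup j (by simp only [Set.mem_Iio] at hj; omega)
  apply le_antisymm
  · -- from a bijection build a walk
    obtain ⟨σ, hσ, hk⟩ := Nat.sInf_mem hBne
    obtain ⟨w, hlen, hsup⟩ := exists_walk_chain hG σ (n - 1)
    apply Nat.sInf_le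
    refine ⟨σ 0, σ (n - 1), w, ?_, ?_⟩
    · intro x
      obtain ⟨j, hj, rfl⟩ := hσ.surjOn (Set.mem_univ x)
      exact hsup j (by simp only [Set.mem_Iio] at hj; omega)
    · rw [hlen, ← hk]
  · -- from a walk build a bijection
    obtain ⟨u, v, w, hsup, hlen⟩ := Nat.sInf_mem hAne
    set s := w.support with hs
    have hslen : s.length = w.length + 1 := SimpleGraph.Walk.length_support w
    have hf_lt : ∀ x : V, s.idxOf x < s.length := fun x =>
      List.idxOf_lt_length_iff.mpr (hsup x)
    have hf_inj : Function.Injective (fun x : V => s.idxOf x) := by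
      intro x y hxy
      exact (List.idxOf_inj (hsup x)).mp hxy
    set T : Finset ℕ := Finset.image (fun x : V => s.idxOf x) Finset.univ with hT
    have hTcard : T.card = n := by
      rw [hT, Finset.card_image_of_injective _ hf_inj, Finset.card_univ, hn]
    set oi := T.orderIsoOfFin hTcard with hoi
    have hmem : ∀ j : Fin n, (oi j : ℕ) ∈ T := fun j => (oi j).2
    have hlt : ∀ j : Fin n, (oi j : ℕ) < s.length := by
      intro j
      obtain ⟨x, -, hx⟩ := Finset.mem_image.mp (hmem j)
      rw [← hx]; exact hf_lt x
    let a : ℕ → ℕ := fun j => (oi ⟨min j (n - 1), by omega⟩ : ℕ)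
    have ha_lt : ∀ j, a j < s.length := fun j => hlt _
    let σ : ℕ → V := fun j => s.get ⟨a j, ha_lt j⟩
    have ha_eq : ∀ j (h : j < n), a j = (oi ⟨j, h⟩ : ℕ) := by
      intro j h
      simp only [a]
      exact congrArg (fun i : Fin n => (oi i : ℕ)) (Fin.ext (show min j (n - 1) = j by omega))
    have hfσ : ∀ j, s.idxOf (σ j) = a j := by
      intro j
      have : a j ∈ T := hmem _
      obtain ⟨x, -, hx⟩ := Finset.mem_image.mp this
      have hx' : s.get ⟨a j, ha_lt j⟩ = x := by
        simp only [← hx, List.get_eq_getElem]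
        exact List.getElem_idxOf (hf_lt x)
      simp only [σ, hx', hx]
    have hbij : Set.BijOn σ (Set.Iio n) Set.univ := by
      refine ⟨fun _ _ => Set.mem_univ _, ?_, ?_⟩
      · intro j hj j' hj' hjj'
        simp only [Set.mem_Iio] at hj hj'
        have : a j = a j' := by rw [← hfσ j, ← hfσ j', hjj']
        rw [ha_eq j hj, ha_eq j' hj'] at this
        have := oi.injective (Subtype.ext this)
        exact congrArg Fin.val this
      · intro x _
        have hxT : s.idxOf x ∈ T := Finset.mem_image.mpr ⟨x, Finset.mem_univ x, rfl⟩
        obtain ⟨i, hi⟩ := oi.surjective ⟨s.idxOf x, hxT⟩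
        refine ⟨i, i.isLt, ?_⟩
        have hai : a i = s.idxOf x := by
          rw [ha_eq i i.isLt]
          simp [Fin.eta, hi]
        simp only [σ, List.get_eq_getElem]
        have := List.getElem_idxOf (xs := s) (x := x) (hf_lt x)
        simp only [hai]
        exact this
    have ha_mono : Monotone a := by
      intro j j' hjj'
      exact oi.monotone (by simp [Fin.mk_le_mk]; omega)
    apply le_trans (Nat.sInf_le (⟨σ, hbij, rfl⟩ : _ ∈ B))
    have hterm : ∀ j ∈ Finset.range (n - 1),
        G.dist (σ j) (σ (j + 1)) ≤ a (j + 1) - a j := by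
      intro j hj
      exact dist_get_le hG w (a (j + 1)) (a j) (ha_mono (by omega)) (ha_lt _)
    calc ∑ j ∈ Finset.range (n - 1), G.dist (σ j) (σ (j + 1))
        ≤ ∑ j ∈ Finset.range (n - 1), (a (j + 1) - a j) := Finset.sum_le_sum hterm
      _ = a (n - 1) - a 0 := Finset.sum_range_tsub ha_mono (n - 1)
      _ ≤ a (n - 1) := Nat.sub_le _ _
      _ ≤ w.length := by have := ha_lt (n - 1); omega
      _ = sInf A := hlen
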